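/- Let ω = 1, fix σ ∈ ℝ and t₀ ∈ ℝ. For v₀ > 0 let t₁(v₀) = inf{ t > t₀ : x(t) = σ } be the time of the next impact and v₁(v₀) = x'(t₁(v₀)) the incoming velocity there, for the resonant motion x(t) = σ·cos(t−t₀) − (v₀ + (1/2)·sin(t₀))·sin(t−t₀) + (1/2)·(t−t₀)·sin(t). Then as v₀ → ∞: t₁(v₀) − t₀ → π, v₁(v₀) − v₀ → −(π/2)·cos(t₀), and v₀·(t₁(v₀) − t₀ − π) → 2σ + (π/2)·sin(t₀). -/

import Mathlib

open Real

noncomputable def Ximp (σ t₀ v t : ℝ) : ℝ :=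
  σ * Real.cos (t - t₀) - (v + (1 / 2) * Real.sin t₀) * Real.sin (t - t₀) +
    (1 / 2) * (t - t₀) * Real.sin t

noncomputable def Dimp (σ t₀ v t : ℝ) : ℝ :=
  -σ * Real.sin (t - t₀) - (v + (1 / 2) * Real.sin t₀) * Real.cos (t - t₀) +
    (1 / 2) * Real.sin t + (1 / 2) * (t - t₀) * Real.cos t

lemma Ximp_hasDerivAt (σ t₀ v t : ℝ) : HasDerivAt (Ximp σ t₀ v) (Dimp σ t₀ v t) t := by
  have h1 : HasDerivAt (fun t : ℝ => t - t₀) 1 t := (hasDerivAt_id t).sub_const t₀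
  have hc : HasDerivAt (fun t : ℝ => Real.cos (t - t₀)) (-Real.sin (t - t₀)) t := by
    simpa [Function.comp_def] using (Real.hasDerivAt_cos (t - t₀)).comp t h1
  have hs : HasDerivAt (fun t : ℝ => Real.sin (t - t₀)) (Real.cos (t - t₀)) t := by
    simpa [Function.comp_def] using (Real.hasDerivAt_sin (t - t₀)).comp t h1
  have h := (((hc.const_mul σ).sub (hs.const_mul (v + (1 / 2) * Real.sin t₀)))).add
    (((h1.const_mul (1/2 : ℝ)).mul (Real.hasDerivAt_sin t)))
  refine h.congr_deriv ?_
  unfold Dimp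
  ring

lemma Ximp_continuous (σ t₀ v : ℝ) : Continuous (Ximp σ t₀ v) := by
  unfold Ximp; fun_prop


lemma aux_sin_pos {e : ℝ} (h0 : 0 < e) (he : e ≤ 1 / 2) :
    e - Real.sin e ≤ Real.sin e * e ^ 2 ∧ 0 < Real.sin e := by
  have hs1 : Real.sin e < e := Real.sin_lt h0
  have hs2 : e - e ^ 3 / 4 < Real.sin e := by have := Real.sin_gt_sub_cube h0; linarith [pow_pos h0 3]
  have he2 : e ^ 2 ≤ 1 / 4 := by nlinarith
  have he3 : e ^ 3 ≤ e / 4 := by nlinarith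
  have hsn : 0 < Real.sin e := by nlinarith
  refine ⟨?_, hsn⟩
  have h5 : (e - e ^ 3 / 4) * e ^ 2 ≤ Real.sin e * e ^ 2 :=
    mul_le_mul_of_nonneg_right hs2.le (sq_nonneg e)
  nlinarith [pow_pos h0 3, pow_pos h0 5, mul_le_mul_of_nonneg_right he2 (pow_pos h0 3).le]

lemma aux_sin_approx {e : ℝ} (he : |e| ≤ 1 / 2) :
    |e - Real.sin e| ≤ |Real.sin e| * e ^ 2 := by
  rcases lt_trichotomy e 0 with h0 | rfl | h0
  · have h0' : (0:ℝ) < -e := by linarith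
    have he' : -e ≤ 1 / 2 := by rw [abs_of_neg h0] at he; linarith
    obtain ⟨h1, h2⟩ := aux_sin_pos h0' he'
    rw [Real.sin_neg] at h1 h2
    rw [abs_of_nonpos (by nlinarith [Real.lt_sin h0] : e - Real.sin e ≤ 0),
      abs_of_nonpos (by linarith : Real.sin e ≤ 0)]
    nlinarith
  · simp
  · have he' : e ≤ 1 / 2 := by rw [abs_of_pos h0] at he; linarith
    obtain ⟨h1, h2⟩ := aux_sin_pos h0 he'
    rw [abs_of_nonneg (by nlinarith [Real.sin_lt h0] : (0:ℝ) ≤ e - Real.sin e),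
      abs_of_pos h2]
    exact h1


set_option maxHeartbeats 2000000 in
lemma loc (σ t₀ : ℝ) {δ : ℝ} (hδ : 0 < δ) (hδ2 : δ ≤ 1 / 2) {v : ℝ}
    (hv : π * (2 * |σ| + π + π ^ 2 * |σ| + 10) / δ ≤ v) :
    (∀ s, 0 < s → s ≤ π - δ → Ximp σ t₀ v (t₀ + s) < σ) ∧
      σ < Ximp σ t₀ v (t₀ + (π + δ)) := by
  have hπ := Real.pi_gt_three
  have hπ0 := Real.pi_pos
  have hσ0 := abs_nonneg σ
  set A : ℝ := v + (1 / 2) * Real.sin t₀ with hA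
  have hsint := abs_le.1 (Real.abs_sin_le_one t₀)
  have hAv : v - 1 / 2 ≤ A := by simp only [hA]; linarith [hsint.1]
  clear_value A
  have hvδ : π * (2 * |σ| + π + π ^ 2 * |σ| + 10) ≤ v * δ := by
    rw [div_le_iff₀ hδ] at hv; linarith
  clear hv
  have c1 : 0 ≤ π * |σ| := by positivity
  have c2 : 0 ≤ π ^ 2 * |σ| := by positivity
  have c3 : π ^ 2 * |σ| ≤ π ^ 3 * |σ| :=
    mul_le_mul_of_nonneg_right (by nlinarith) hσ0
  have hBpos : 0 < π * (2 * |σ| + π + π ^ 2 * |σ| + 10) := by positivity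
  have hv0 : 0 < v := by
    rcases mul_pos_iff.mp (hBpos.trans_le hvδ) with ⟨h, _⟩ | ⟨_, h⟩
    · exact h
    · linarith
  have hv2 : v * δ ≤ v / 2 := by nlinarith [mul_le_mul_of_nonneg_left hδ2 hv0.le]
  have h1' : |σ| * π ^ 2 / 4 + 3 * π / 2 ≤ 2 * A := by
    nlinarith [sq_nonneg π, mul_nonneg hσ0 (sq_nonneg π)]
  have hAδ : (v - 1 / 2) * δ ≤ A * δ := mul_le_mul_of_nonneg_right hAv hδ.le
  have h2' : (2 * |σ| + π + 1) * π ≤ 2 * A * δ := by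
    nlinarith [sq_nonneg π, mul_nonneg hσ0 (sq_nonneg π)]
  have hA0 : 0 ≤ A := by nlinarith
  have e5 : (2 * |σ| + π + 1) ≤ A * (2 / π * δ) := by
    rw [div_mul_eq_mul_div, ← mul_div_assoc, le_div_iff₀ hπ0]
    nlinarith
  constructor
  · intro s h0 hs
    have hXs : Ximp σ t₀ v (t₀ + s) =
        σ * Real.cos s - A * Real.sin s + 1 / 2 * s * Real.sin (t₀ + s) := by
      unfold Ximp; rw [add_sub_cancel_left, ← hA]
    rw [hXs]
    have e3 : 1 / 2 * s * Real.sin (t₀ + s) ≤ s / 2 := by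
      nlinarith [Real.sin_le_one (t₀ + s), h0.le]
    rcases le_or_gt s (π / 2) with hs2 | hs2
    · have hsin : 2 / π * s ≤ Real.sin s := Real.mul_le_sin h0.le hs2
      have hcos : 1 - s ^ 2 / 2 ≤ Real.cos s := Real.one_sub_sq_div_two_le_cos
      have e1 : σ * Real.cos s ≤ σ + |σ| * (s ^ 2 / 2) := by
        nlinarith [mul_le_mul_of_nonneg_right (neg_abs_le σ)
            (sub_nonneg.2 (Real.cos_le_one s)),
          mul_le_mul_of_nonneg_left (by linarith : 1 - Real.cos s ≤ s ^ 2 / 2) hσ0]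
      have e2 : |σ| * (s ^ 2 / 2) ≤ |σ| * π / 4 * s := by
        nlinarith [mul_le_mul_of_nonneg_left
          (mul_le_mul_of_nonneg_right hs2 h0.le) hσ0]
      have e4 : A * (2 / π * s) ≤ A * Real.sin s :=
        mul_le_mul_of_nonneg_left hsin hA0
      have e6 : (|σ| * π / 4 + 3 / 2) * s ≤ A * (2 / π * s) := by
        rw [div_mul_eq_mul_div, ← mul_div_assoc, le_div_iff₀ hπ0]
        nlinarith [mul_le_mul_of_nonneg_right h1' h0.le]
      linarith
    · have hsin : 2 / π * δ ≤ Real.sin s := by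
        have h7 : Real.sin (π - s) = Real.sin s := Real.sin_pi_sub s
        have h8 : 2 / π * (π - s) ≤ Real.sin (π - s) :=
          Real.mul_le_sin (by linarith) (by linarith)
        have h9 : 2 / π * δ ≤ 2 / π * (π - s) := by
          apply mul_le_mul_of_nonneg_left (by linarith) (by positivity)
        linarith
      have e1 : σ * Real.cos s ≤ |σ| := by
        nlinarith [Real.neg_one_le_cos s, Real.cos_le_one s, le_abs_self σ, neg_abs_le σ]
      have e4 : A * (2 / π * δ) ≤ A * Real.sin s :=
        mul_le_mul_of_nonneg_left hsin hA0
      linarith [le_abs_self σ, neg_abs_le σ]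
  · have hc : Real.cos (π + δ) = -Real.cos δ := by simp [Real.cos_add]
    have hs' : Real.sin (π + δ) = -Real.sin δ := by simp [Real.sin_add]
    have hXs : Ximp σ t₀ v (t₀ + (π + δ)) =
        -(σ * Real.cos δ) + A * Real.sin δ +
          1 / 2 * (π + δ) * Real.sin (t₀ + (π + δ)) := by
      unfold Ximp; rw [add_sub_cancel_left, ← hA, hc, hs']; ring
    rw [hXs]
    have hsδ : 2 / π * δ ≤ Real.sin δ := Real.mul_le_sin hδ.le (by linarith)
    have e4 : A * (2 / π * δ) ≤ A * Real.sin δ :=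
      mul_le_mul_of_nonneg_left hsδ hA0
    have e1 : σ * Real.cos δ ≤ |σ| := by
      nlinarith [Real.neg_one_le_cos δ, Real.cos_le_one δ, le_abs_self σ, neg_abs_le σ]
    have e3 : -(1 / 2 * (π + δ)) ≤ 1 / 2 * (π + δ) * Real.sin (t₀ + (π + δ)) := by
      nlinarith [Real.neg_one_le_sin (t₀ + (π + δ)), Real.sin_le_one (t₀ + (π + δ))]
    linarith [le_abs_self σ]

/-- High-velocity asymptotics of the impact map for resonant forcing `ω = 1`:
with next impact time `t₁(v₀)` and incoming velocity `v₁(v₀) = x'(t₁(v₀))`,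
one has `t₁(v₀) - t₀ → π`, `v₁(v₀) - v₀ → -(π/2) cos t₀`, and
`v₀ (t₁(v₀) - t₀ - π) → 2σ + (π/2) sin t₀` as `v₀ → ∞`. -/
theorem impact_oscillator_resonant_asymptotics
    (σ t₀ : ℝ)
    (x xd : ℝ → ℝ → ℝ)
    (hx : ∀ v₀ t, x v₀ t = σ * Real.cos (t - t₀) -
      (v₀ + (1 / 2) * Real.sin t₀) * Real.sin (t - t₀) +
      (1 / 2) * (t - t₀) * Real.sin t)
    (hxd : ∀ v₀ t, HasDerivAt (x v₀) (xd v₀ t) t)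
    (t₁ : ℝ → ℝ)
    (ht₁ : ∀ v₀, t₁ v₀ = sInf {t : ℝ | t₀ < t ∧ x v₀ t = σ})
    (v₁ : ℝ → ℝ)
    (hv₁ : ∀ v₀, v₁ v₀ = xd v₀ (t₁ v₀)) :
    Filter.Tendsto (fun v₀ => t₁ v₀ - t₀) Filter.atTop (nhds π) ∧
    Filter.Tendsto (fun v₀ => v₁ v₀ - v₀) Filter.atTop
      (nhds (-(π / 2) * Real.cos t₀)) ∧
    Filter.Tendsto (fun v₀ => v₀ * (t₁ v₀ - t₀ - π)) Filter.atTop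
      (nhds (2 * σ + (π / 2) * Real.sin t₀)) := by
  have hπ := Real.pi_gt_three
  have hxX : ∀ v, x v = Ximp σ t₀ v := fun v => funext fun t => by rw [hx]; rfl
  set E : ℝ → ℝ := fun v => t₁ v - t₀ - π with hE
  -- key localization, eventually in v
  have key : ∀ δ : ℝ, 0 < δ → δ ≤ 1 / 2 →
      ∀ᶠ v in Filter.atTop, |E v| ≤ δ ∧ x v (t₁ v) = σ := by
    intro δ hδ hδ2
    filter_upwards [Filter.eventually_ge_atTop
      (π * (2 * |σ| + π + π ^ 2 * |σ| + 10) / δ)] with v hv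
    obtain ⟨hneg, hpos⟩ := loc σ t₀ hδ hδ2 hv
    have hneg' : ∀ t, t₀ < t → t ≤ t₀ + (π - δ) → x v t < σ := by
      intro t h1 h2
      have := hneg (t - t₀) (by linarith) (by linarith)
      rw [show t₀ + (t - t₀) = t by ring, ← hxX v] at this
      exact this
    have hcont : Continuous (x v) := by rw [hxX]; exact Ximp_continuous σ t₀ v
    have hmem : σ ∈ Set.Icc (x v (t₀ + (π - δ))) (x v (t₀ + (π + δ))) := by
      constructor
      · exact (hneg' (t₀ + (π - δ)) (by linarith) le_rfl).le
      · rw [hxX]; exact hpos.le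
    obtain ⟨c, hc, hxc⟩ := intermediate_value_Icc (by linarith : t₀ + (π - δ) ≤ t₀ + (π + δ))
      hcont.continuousOn hmem
    have hcS : c ∈ {t : ℝ | t₀ < t ∧ x v t = σ} := ⟨by have := hc.1; linarith, hxc⟩
    have hSne : Set.Nonempty {t : ℝ | t₀ < t ∧ x v t = σ} := ⟨c, hcS⟩
    have hSbd : BddBelow {t : ℝ | t₀ < t ∧ x v t = σ} :=
      ⟨t₀, fun t ht => ht.1.le⟩
    have hub : t₁ v ≤ c := by rw [ht₁ v]; exact csInf_le hSbd hcS
    have hlb : t₀ + (π - δ) ≤ t₁ v := by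
      rw [ht₁ v]
      apply le_csInf hSne
      intro t ht
      by_contra hle
      push_neg at hle
      exact absurd ht.2 (ne_of_lt (hneg' t ht.1 hle.le))
    have hxt₁ : x v (t₁ v) = σ := by
      have hclosed : IsClosed {t : ℝ | x v t = σ} :=
        isClosed_eq hcont continuous_const
      have h1 : t₁ v ∈ closure {t : ℝ | t₀ < t ∧ x v t = σ} := by
        rw [ht₁ v]; exact csInf_mem_closure hSne hSbd
      have h2 : closure {t : ℝ | t₀ < t ∧ x v t = σ} ⊆ {t : ℝ | x v t = σ} :=
        hclosed.closure_subset_iff.2 fun t ht => ht.2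
      exact h2 h1
    refine ⟨abs_le.2 ⟨?_, ?_⟩, hxt₁⟩
    · simp only [hE]; linarith [hc.1]
    · simp only [hE]; linarith [hc.2]
  -- E tends to 0
  have hE0 : Filter.Tendsto E Filter.atTop (nhds 0) := by
    rw [Metric.tendsto_atTop]
    intro ε hε
    obtain ⟨N, hN⟩ := Filter.eventually_atTop.mp
      (key (min (ε / 2) (1 / 2)) (by positivity) (min_le_right _ _))
    exact ⟨N, fun v hv => by
      have := (hN v hv).1
      rw [Real.dist_eq, sub_zero]
      calc |E v| ≤ min (ε / 2) (1 / 2) := this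
        _ ≤ ε / 2 := min_le_left _ _
        _ < ε := by linarith⟩
  have hev : ∀ᶠ v in Filter.atTop, |E v| ≤ 1 / 2 ∧ x v (t₁ v) = σ :=
    key (1 / 2) (by norm_num) le_rfl
  have ht1E : ∀ v, t₁ v = t₀ + (π + E v) := fun v => by simp only [hE]; ring
  -- the exact impact identity
  have hId : ∀ᶠ v in Filter.atTop,
      (v + 1 / 2 * Real.sin t₀) * Real.sin (E v) =
        σ * (1 + Real.cos (E v)) -
          1 / 2 * (π + E v) * Real.sin (t₀ + (π + E v)) := by
    filter_upwards [hev] with v hv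
    have h0 := hv.2
    rw [hx v (t₁ v), ht1E v, add_sub_cancel_left] at h0
    have hcpe : Real.cos (π + E v) = -Real.cos (E v) := by
      rw [Real.cos_add]; simp
    have hspe : Real.sin (π + E v) = -Real.sin (E v) := by
      rw [Real.sin_add]; simp
    rw [hcpe, hspe] at h0
    linarith [h0]
  -- limit of A * sin E
  have hg : Filter.Tendsto
      (fun v => σ * (1 + Real.cos (E v)) -
        1 / 2 * (π + E v) * Real.sin (t₀ + (π + E v)))
      Filter.atTop (nhds (2 * σ + π / 2 * Real.sin t₀)) := by
    have hcont : Continuous (fun y : ℝ =>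
        σ * (1 + Real.cos y) - 1 / 2 * (π + y) * Real.sin (t₀ + (π + y))) := by
      fun_prop
    have h0 : σ * (1 + Real.cos 0) - 1 / 2 * (π + 0) * Real.sin (t₀ + (π + 0)) =
        2 * σ + π / 2 * Real.sin t₀ := by
      simp [Real.sin_add]
      ring
    have := (hcont.tendsto 0).comp hE0
    rw [h0] at this
    exact this
  have h3 : Filter.Tendsto (fun v => (v + 1 / 2 * Real.sin t₀) * Real.sin (E v))
      Filter.atTop (nhds (2 * σ + π / 2 * Real.sin t₀)) :=
    hg.congr' (hId.mono fun v h => h.symm)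
  -- limit of A * E
  have h4 : Filter.Tendsto (fun v => (v + 1 / 2 * Real.sin t₀) * E v)
      Filter.atTop (nhds (2 * σ + π / 2 * Real.sin t₀)) := by
    have hdiff : Filter.Tendsto
        (fun v => (v + 1 / 2 * Real.sin t₀) * E v -
          (v + 1 / 2 * Real.sin t₀) * Real.sin (E v))
        Filter.atTop (nhds 0) := by
      apply squeeze_zero_norm'
        (a := fun v => |(v + 1 / 2 * Real.sin t₀) * Real.sin (E v)| * (E v) ^ 2)
      · filter_upwards [hev] with v hv
        have h1 : (v + 1 / 2 * Real.sin t₀) * E v -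
            (v + 1 / 2 * Real.sin t₀) * Real.sin (E v) =
            (v + 1 / 2 * Real.sin t₀) * (E v - Real.sin (E v)) := by ring
        rw [Real.norm_eq_abs, h1, abs_mul]
        calc |v + 1 / 2 * Real.sin t₀| * |E v - Real.sin (E v)|
            ≤ |v + 1 / 2 * Real.sin t₀| * (|Real.sin (E v)| * (E v) ^ 2) :=
              mul_le_mul_of_nonneg_left (aux_sin_approx hv.1) (abs_nonneg _)
          _ = |(v + 1 / 2 * Real.sin t₀) * Real.sin (E v)| * (E v) ^ 2 := by
              rw [abs_mul]; ring
      · have := (h3.abs.mul (hE0.pow 2))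
        simpa using this
    have := hdiff.add h3
    simp only [sub_add_cancel, zero_add] at this
    exact this
  -- third limit
  have hthird : Filter.Tendsto (fun v₀ => v₀ * (t₁ v₀ - t₀ - π)) Filter.atTop
      (nhds (2 * σ + (π / 2) * Real.sin t₀)) := by
    have h5 := h4.sub (hE0.const_mul (1 / 2 * Real.sin t₀))
    simp only [mul_zero, sub_zero] at h5
    refine h5.congr fun v => by simp only [hE]; ring
  -- first limit
  have hfirst : Filter.Tendsto (fun v₀ => t₁ v₀ - t₀) Filter.atTop (nhds π) := by
    have := (tendsto_const_nhds (x := π) (f := Filter.atTop (α := ℝ))).add hE0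
    rw [add_zero] at this
    refine this.congr fun v => by simp only [hE]; ring
  -- derivative identification
  have hxdD : ∀ v t, xd v t = Dimp σ t₀ v t := fun v t =>
    (hxd v t).unique (by rw [hxX v]; exact Ximp_hasDerivAt σ t₀ v t)
  -- second limit
  have hsecond : Filter.Tendsto (fun v₀ => v₁ v₀ - v₀) Filter.atTop
      (nhds (-(π / 2) * Real.cos t₀)) := by
    have hrepr : ∀ v, v₁ v - v =
        (v + 1 / 2 * Real.sin t₀) * (Real.cos (E v) - 1) +
          (σ * Real.sin (E v) + 1 / 2 * Real.sin t₀ +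
            1 / 2 * Real.sin (t₀ + (π + E v)) +
            1 / 2 * (π + E v) * Real.cos (t₀ + (π + E v))) := by
      intro v
      rw [hv₁ v, hxdD v (t₁ v)]
      unfold Dimp
      rw [ht1E v, add_sub_cancel_left]
      have hcpe : Real.cos (π + E v) = -Real.cos (E v) := by
        rw [Real.cos_add]; simp
      have hspe : Real.sin (π + E v) = -Real.sin (E v) := by
        rw [Real.sin_add]; simp
      rw [hcpe, hspe]
      ring
    have hterm1 : Filter.Tendsto
        (fun v => (v + 1 / 2 * Real.sin t₀) * (Real.cos (E v) - 1))
        Filter.atTop (nhds 0) := by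
      apply squeeze_zero_norm'
        (a := fun v => |(v + 1 / 2 * Real.sin t₀) * E v| * |E v| / 2)
      · filter_upwards with v
        have hcos : 1 - (E v) ^ 2 / 2 ≤ Real.cos (E v) :=
          Real.one_sub_sq_div_two_le_cos
        have hcos2 : Real.cos (E v) ≤ 1 := Real.cos_le_one _
        have h2 : |Real.cos (E v) - 1| ≤ (E v) ^ 2 / 2 := by
          rw [abs_le]; constructor <;> nlinarith
        rw [Real.norm_eq_abs, abs_mul, abs_mul]
        calc |v + 1 / 2 * Real.sin t₀| * |Real.cos (E v) - 1|
            ≤ |v + 1 / 2 * Real.sin t₀| * ((E v) ^ 2 / 2) :=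
              mul_le_mul_of_nonneg_left h2 (abs_nonneg _)
          _ = |v + 1 / 2 * Real.sin t₀| * |E v| * |E v| / 2 := by
              rw [← sq_abs (E v)]; ring
      · have := ((h4.abs.mul hE0.abs).div_const 2)
        simpa using this
    have hterm2 : Filter.Tendsto
        (fun v => σ * Real.sin (E v) + 1 / 2 * Real.sin t₀ +
          1 / 2 * Real.sin (t₀ + (π + E v)) +
          1 / 2 * (π + E v) * Real.cos (t₀ + (π + E v)))
        Filter.atTop (nhds (-(π / 2) * Real.cos t₀)) := by
      have hcont : Continuous (fun y : ℝ =>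
          σ * Real.sin y + 1 / 2 * Real.sin t₀ + 1 / 2 * Real.sin (t₀ + (π + y)) +
            1 / 2 * (π + y) * Real.cos (t₀ + (π + y))) := by fun_prop
      have h0 : σ * Real.sin 0 + 1 / 2 * Real.sin t₀ +
          1 / 2 * Real.sin (t₀ + (π + 0)) +
          1 / 2 * (π + 0) * Real.cos (t₀ + (π + 0)) = -(π / 2) * Real.cos t₀ := by
        simp only [Real.sin_zero, mul_zero, add_zero, Real.sin_add, Real.cos_add,
          Real.sin_pi, Real.cos_pi]
        ring
      have := (hcont.tendsto 0).comp hE0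
      rw [h0] at this
      exact this
    have := hterm1.add hterm2
    rw [zero_add] at this
    exact this.congr fun v => (hrepr v).symm
  exact ⟨hfirst, hsecond, hthird⟩
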